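/- Under the identification of the extended affine Weyl group of type A with n-periodic bijections of Z, the bounded affine permutations B = {f : Z → Z bijection : f(i+n) = f(i)+n, (1/n)Σ_{i=1}^n (f(i)−i) = k, and i ≤ f(i) ≤ i+n for all i} are exactly the elements of the form f = u·t_λ·w⁻¹ where λ = e_1+...+e_k, u, w ∈ S_n with u ≤_P w in the extended P-Bruhat order for W_P = S_k × S_{n−k}. -/

import Mathlib

/-!
STATEMENT 12: Under the identification of the extended affine Weyl group of type `A` with
`n`-periodic bijections of `ℤ` (`w t_λ ↦ (i ↦ w(i) + λ_i n)` on `0 ≤ i < n`, extended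
periodically), the bounded affine permutations
`B = {f : f(i+n) = f(i)+n, (1/n)Σ_{i<n}(f(i)−i) = k, i ≤ f(i) ≤ i+n}` are exactly the
elements `f = u·t_λ·w⁻¹` with `λ = e_1 + ⋯ + e_k`, `u, w ∈ S_n` and `u ≤_P w` in the
extended `P`-Bruhat (= extended `k`-Bruhat) order for `W_P = S_k × S_{n−k}`.
-/

open Equiv

variable (n : ℕ) [NeZero n]

/-- The residue of `i : ℤ` modulo `n`, as an element of `Fin n`. -/
def residue (i : ℤ) : Fin n :=
  ⟨(i % (n : ℤ)).toNat, by
    have hn : 0 < (n : ℤ) := Int.natCast_pos.mpr (Nat.pos_of_ne_zero (NeZero.ne n))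
    have h1 : 0 ≤ i % (n : ℤ) := Int.emod_nonneg i (by omega)
    have h2 : i % (n : ℤ) < n := Int.emod_lt_of_pos i hn
    omega⟩

/-- The `n`-periodic extension of a permutation of `{0,…,n−1}` to a bijection of `ℤ`. -/
def toAff (w : Perm (Fin n)) (i : ℤ) : ℤ :=
  (n : ℤ) * (i / (n : ℤ)) + ((w (residue n i) : ℕ) : ℤ)

/-- The translation `t_λ` for `λ = e_1 + ⋯ + e_k` as an `n`-periodic bijection of `ℤ`:
`i ↦ i + λ_{i mod n}·n`. -/
def tLamFun (k : ℕ) (i : ℤ) : ℤ :=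
  i + (if ((residue n i : Fin n) : ℕ) < k then (n : ℤ) else 0)

/-- Number of inversions (Coxeter length) of a permutation of `Fin n`. -/
def invLength (u : Perm (Fin n)) : ℕ :=
  (Finset.univ.filter (fun p : Fin n × Fin n => p.1 < p.2 ∧ u p.2 < u p.1)).card

/-- The extended `k`-Bruhat order (= extended `P`-Bruhat order for `W_P = S_k × S_{n−k}`):
transitive closure of `u → u·τ_{ab}` with `a < k ≤ b` (0-indexed) and increasing length. -/
def extKLE (k : ℕ) : Perm (Fin n) → Perm (Fin n) → Prop :=
  Relation.ReflTransGen (fun u w => ∃ a b : Fin n, (a : ℕ) < k ∧ k ≤ (b : ℕ) ∧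
    w = u * Equiv.swap a b ∧ invLength n u < invLength n w)



lemma hnpos : 0 < (n:ℤ) := Int.natCast_pos.mpr (Nat.pos_of_ne_zero (NeZero.ne n))

lemma residue_eq (q : ℤ) (m : Fin n) : residue n ((n:ℤ) * q + (m:ℕ)) = m := by
  have hn := hnpos n
  have hm : ((m:ℕ):ℤ) < n := by exact_mod_cast m.isLt
  have hm0 : (0:ℤ) ≤ (m:ℕ) := by positivity
  have : ((n:ℤ) * q + (m:ℕ)) % n = (m:ℕ) := by
    rw [add_comm, Int.add_mul_emod_self_left]
    exact Int.emod_eq_of_lt hm0 hm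
  simp [residue, this]

lemma ediv_eq (q : ℤ) (m : Fin n) : ((n:ℤ) * q + (m:ℕ)) / n = q := by
  have hn := hnpos n
  have hm : ((m:ℕ):ℤ) < n := by exact_mod_cast m.isLt
  have hm0 : (0:ℤ) ≤ (m:ℕ) := by positivity
  rw [add_comm, Int.add_mul_ediv_left _ _ (ne_of_gt hn), Int.ediv_eq_zero_of_lt hm0 hm]
  simp

lemma decomp (i : ℤ) : (n:ℤ) * (i / n) + ((residue n i : ℕ):ℤ) = i := by
  have h1 : 0 ≤ i % (n : ℤ) := Int.emod_nonneg i (by have := hnpos n; omega)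
  have : ((residue n i : ℕ):ℤ) = i % n := by simp [residue]; omega
  rw [this]; exact Int.mul_ediv_add_emod i n

lemma toAff_apply (w : Perm (Fin n)) (q : ℤ) (m : Fin n) :
    toAff n w ((n:ℤ) * q + (m:ℕ)) = (n:ℤ) * q + (w m : ℕ) := by
  rw [toAff, residue_eq, ediv_eq]

lemma toAff_mul (u w : Perm (Fin n)) : toAff n (u * w) = toAff n u ∘ toAff n w := by
  funext i
  have := decomp n i
  conv_lhs => rw [← this]
  conv_rhs => rw [← this]
  simp only [Function.comp, toAff_apply]
  rfl

lemma toAff_one : toAff n 1 = id := by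
  funext i; simpa [toAff] using decomp n i

lemma toAff_bij (w : Perm (Fin n)) : Function.Bijective (toAff n w) := by
  have h1 : toAff n w ∘ toAff n w⁻¹ = id := by rw [← toAff_mul, mul_inv_cancel, toAff_one]
  have h2 : toAff n w⁻¹ ∘ toAff n w = id := by rw [← toAff_mul, inv_mul_cancel, toAff_one]
  exact Function.bijective_iff_has_inverse.mpr ⟨toAff n w⁻¹, congrFun h2, congrFun h1⟩

lemma tLam_apply (k : ℕ) (q : ℤ) (m : Fin n) :
    tLamFun n k ((n:ℤ) * q + (m:ℕ)) =
      (n:ℤ) * (q + (if (m:ℕ) < k then 1 else 0)) + (m:ℕ) := by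
  rw [tLamFun, residue_eq]
  split <;> ring

lemma tLam_inv (k : ℕ) (q : ℤ) (m : Fin n) :
    ((n:ℤ) * q + (m:ℕ)) - (if ((residue n ((n:ℤ) * q + (m:ℕ)) : Fin n) : ℕ) < k then (n:ℤ) else 0)
      = (n:ℤ) * (q - (if (m:ℕ) < k then 1 else 0)) + (m:ℕ) := by
  rw [residue_eq]; split <;> ring

lemma tLam_bij (k : ℕ) : Function.Bijective (tLamFun n k) := by
  rw [Function.bijective_iff_has_inverse]
  refine ⟨fun j => j - (if ((residue n j : Fin n) : ℕ) < k then (n:ℤ) else 0), ?_, ?_⟩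
  · intro i
    show tLamFun n k i - _ = i
    conv_lhs => rw [← decomp n i, tLam_apply]
    rw [tLam_inv]
    conv_rhs => rw [← decomp n i]
    congr 1; ring
  · intro j
    show tLamFun n k (j - _) = j
    conv_lhs => rw [← decomp n j]
    rw [tLam_inv, tLam_apply]
    conv_rhs => rw [← decomp n j]
    congr 1; ring

lemma invLength_lt (v : Perm (Fin n)) (a b : Fin n) (hab : a < b) (hv : v a < v b) :
    invLength n v < invLength n (v * Equiv.swap a b) := by
  classical
  set τ := Equiv.swap a b with hτ
  set v' := v * τ with hv'
  have hvt : ∀ x, v' x = v (τ x) := fun x => rfl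
  have hττ : ∀ x, τ (τ x) = x := fun x => Equiv.swap_apply_self a b x
  set S := Finset.univ.filter (fun p : Fin n × Fin n => p.1 < p.2 ∧ v p.2 < v p.1) with hS
  set S' := Finset.univ.filter (fun p : Fin n × Fin n => p.1 < p.2 ∧ v' p.2 < v' p.1) with hS'
  have hab' : (⟨a, b⟩ : Fin n × Fin n) ∈ S' := by
    simp only [hS', Finset.mem_filter, Finset.mem_univ, true_and]
    refine ⟨hab, ?_⟩
    rw [hvt, hvt, hτ, Equiv.swap_apply_left, Equiv.swap_apply_right]
    exact hv
  set Φ : Fin n × Fin n → Fin n × Fin n :=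
    fun p => if τ p.1 < τ p.2 then (τ p.1, τ p.2) else p with hΦ
  have hmaps : ∀ p ∈ S, Φ p ∈ S'.erase ⟨a, b⟩ := by
    rintro ⟨i, j⟩ hp
    simp only [hS, Finset.mem_filter, Finset.mem_univ, true_and] at hp
    obtain ⟨hij, hvji⟩ := hp
    rw [Finset.mem_erase]
    by_cases hc : τ i < τ j
    · have hΦp : Φ (i, j) = (τ i, τ j) := by simp [hΦ, hc]
      rw [hΦp]
      constructor
      · rintro h
        have h1 : τ i = a := congrArg Prod.fst h
        have h2 : τ j = b := congrArg Prod.snd h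
        have hib : i = b := by rw [← hττ i, h1, hτ, Equiv.swap_apply_left]
        have hja : j = a := by rw [← hττ j, h2, hτ, Equiv.swap_apply_right]
        rw [hib, hja] at hij
        exact absurd hij (asymm hab)
      · simp only [hS', Finset.mem_filter, Finset.mem_univ, true_and]
        exact ⟨hc, by rw [hvt, hvt, hττ, hττ]; exact hvji⟩
    · have hΦp : Φ (i, j) = (i, j) := by simp [hΦ, hc]
      rw [hΦp]
      have hne : i ≠ j := ne_of_lt hij
      by_cases hia : i = a
      · by_cases hjb : j = b
        · exact absurd hv (by rw [← hia, ← hjb]; exact asymm hvji)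
        · have hja : j ≠ a := by rw [hia] at hij; exact fun h => absurd hij (h ▸ lt_irrefl a)
          have hτj : τ j = j := Equiv.swap_apply_of_ne_of_ne hja hjb
          have hτi : τ i = b := by rw [hia, hτ, Equiv.swap_apply_left]
          refine ⟨fun h => hjb (congrArg Prod.snd h), ?_⟩
          simp only [hS', Finset.mem_filter, Finset.mem_univ, true_and]
          refine ⟨hij, ?_⟩
          rw [hvt, hvt, hτj, hτi]
          calc v j < v i := hvji
            _ = v a := by rw [hia]
            _ < v b := hv
      · by_cases hib : i = b
        · exfalso
          apply hc
          have hja : j ≠ a := fun h => absurd (h ▸ hib ▸ hij) (asymm hab)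
          have hjb : j ≠ b := fun h => hne (hib.trans h.symm)
          have hτj : τ j = j := Equiv.swap_apply_of_ne_of_ne hja hjb
          have hτi : τ i = a := by rw [hib, hτ, Equiv.swap_apply_right]
          rw [hτi, hτj]
          exact lt_trans hab (hib ▸ hij)
        · have hτi : τ i = i := Equiv.swap_apply_of_ne_of_ne hia hib
          by_cases hja : j = a
          · exfalso
            apply hc
            have hτj : τ j = b := by rw [hja, hτ, Equiv.swap_apply_left]
            rw [hτi, hτj]
            exact lt_trans hij (hja ▸ hab)
          · by_cases hjb : j = b
            · have hτj : τ j = a := by rw [hjb, hτ, Equiv.swap_apply_right]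
              refine ⟨fun h => hia (congrArg Prod.fst h), ?_⟩
              simp only [hS', Finset.mem_filter, Finset.mem_univ, true_and]
              refine ⟨hij, ?_⟩
              rw [hvt, hvt, hτi, hτj]
              exact lt_trans hv (hjb ▸ hvji)
            · have hτj : τ j = j := Equiv.swap_apply_of_ne_of_ne hja hjb
              exact absurd (by rw [hτi, hτj]; exact hij) hc
  have hinj : Set.InjOn Φ S := by
    rintro ⟨i, j⟩ hp ⟨i', j'⟩ hq h
    simp only [hS, Finset.coe_filter, Set.mem_setOf_eq] at hp hq
    by_cases hc : τ i < τ j <;> by_cases hc' : τ i' < τ j' <;>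
      simp only [hΦ, hc, hc', if_pos, if_neg, if_true, if_false] at h
    · have h1 : τ i = τ i' := congrArg Prod.fst h
      have h2 : τ j = τ j' := congrArg Prod.snd h
      exact Prod.ext (τ.injective h1) (τ.injective h2)
    · -- (τ i, τ j) = (i', j'), ¬ τ i' < τ j'
      exfalso
      have h1 : τ i = i' := congrArg Prod.fst h
      have h2 : τ j = j' := congrArg Prod.snd h
      apply hc'
      rw [← h1, ← h2, hττ, hττ]
      exact hp.2.1
    · exfalso
      have h1 : i = τ i' := ((congrArg Prod.fst h).symm : (τ i', τ j').1 = (i,j).1).symm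
      have h2 : j = τ j' := ((congrArg Prod.snd h).symm : (τ i', τ j').2 = (i,j).2).symm
      apply hc
      rw [h1, h2, hττ, hττ]
      exact hq.2.1
    · exact h
  have hcard : S.card ≤ (S'.erase ⟨a,b⟩).card := Finset.card_le_card_of_injOn Φ hmaps hinj
  have h1 : (S'.erase ⟨a,b⟩).card = S'.card - 1 := Finset.card_erase_of_mem hab'
  have h2 : 0 < S'.card := Finset.card_pos.mpr ⟨_, hab'⟩
  show S.card < S'.card
  omega

lemma step_lt {k : ℕ} {u w : Perm (Fin n)} (a b : Fin n) (hak : (a:ℕ) < k) (hkb : k ≤ (b:ℕ))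
    (hw : w = u * Equiv.swap a b) (hl : invLength n u < invLength n w) : u a < u b := by
  have hab : a < b := by rw [Fin.lt_def]; omega
  have hne : u a ≠ u b := fun h => absurd (u.injective h) (ne_of_lt hab)
  rcases lt_or_gt_of_ne hne with h | h
  · exact h
  · exfalso
    have hwa : w a = u b := by rw [hw]; simp [Equiv.Perm.mul_apply]
    have hwb : w b = u a := by rw [hw]; simp [Equiv.Perm.mul_apply]
    have := invLength_lt n w a b hab (by rw [hwa, hwb]; exact h)
    rw [hw, mul_assoc, Equiv.swap_mul_self, mul_one] at this
    rw [hw] at hl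
    omega

lemma extKLE_componentwise {k : ℕ} {u w : Perm (Fin n)} (h : extKLE n k u w) (c : Fin n) :
    ((c:ℕ) < k → u c ≤ w c) ∧ (k ≤ (c:ℕ) → w c ≤ u c) := by
  induction h with
  | refl => exact ⟨fun _ => le_refl _, fun _ => le_refl _⟩
  | tail _ hstep ih =>
    rename_i v w _
    obtain ⟨a, b, hak, hkb, hw, hl⟩ := hstep
    have hab := step_lt n a b hak hkb hw hl
    constructor
    · intro hck
      by_cases hca : c = a
      · have : w c = v b := by rw [hw, hca]; simp [Equiv.Perm.mul_apply]
        rw [this]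
        exact le_of_lt (lt_of_le_of_lt (ih.1 hck) (hca ▸ hab))
      · have hcb : c ≠ b := fun h => by rw [h] at hck; omega
        have : w c = v c := by
          rw [hw]; simp [Equiv.Perm.mul_apply, Equiv.swap_apply_of_ne_of_ne hca hcb]
        rw [this]; exact ih.1 hck
    · intro hkc
      by_cases hcb : c = b
      · have : w c = v a := by rw [hw, hcb]; simp [Equiv.Perm.mul_apply]
        rw [this]
        exact le_of_lt (lt_of_lt_of_le hab (hcb ▸ ih.2 hkc))
      · have hca : c ≠ a := fun h => by rw [h] at hkc; omega
        have : w c = v c := by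
          rw [hw]; simp [Equiv.Perm.mul_apply, Equiv.swap_apply_of_ne_of_ne hca hcb]
        rw [this]; exact ih.2 hkc

lemma card_filter_lt (k : ℕ) (hk : k ≤ n) :
    (Finset.univ.filter (fun a : Fin n => (a:ℕ) < k)).card = k := by
  have : (Finset.univ.filter (fun a : Fin n => (a:ℕ) < k)) =
      Finset.univ.map (Fin.castLEEmb hk) := by
    ext a
    simp only [Finset.mem_filter, Finset.mem_univ, true_and, Finset.mem_map]
    constructor
    · intro ha
      refine ⟨⟨(a:ℕ), ha⟩, ?_⟩
      simp [Fin.castLEEmb, Fin.castLE]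
    · rintro ⟨x, rfl⟩
      simpa using x.isLt
  rw [this, Finset.card_map, Finset.card_univ, Fintype.card_fin]

lemma g_apply (u w : Perm (Fin n)) (k : ℕ) (q : ℤ) (m : Fin n) :
    (toAff n u ∘ tLamFun n k ∘ toAff n w⁻¹) ((n:ℤ)*q + (m:ℕ)) =
      (n:ℤ)*(q + if ((w⁻¹ m : Fin n):ℕ) < k then 1 else 0) + ((u (w⁻¹ m) : ℕ):ℤ) := by
  simp only [Function.comp_apply]
  rw [toAff_apply, tLam_apply, toAff_apply]

lemma back_dir (k : ℕ) (hk : k ≤ n) (u w : Perm (Fin n)) (hle : extKLE n k u w) :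
    letI f := toAff n u ∘ tLamFun n k ∘ toAff n w⁻¹
    (Function.Bijective f ∧ (∀ i : ℤ, f (i + n) = f i + n) ∧
      (∑ i ∈ Finset.range n, (f i - i)) = (k : ℤ) * n ∧
      (∀ i : ℤ, i ≤ f i ∧ f i ≤ i + n)) := by
  set f := toAff n u ∘ tLamFun n k ∘ toAff n w⁻¹ with hf
  have hcw := extKLE_componentwise n hle
  refine ⟨?_, ?_, ?_, ?_⟩
  · exact (toAff_bij n u).comp ((tLam_bij n k).comp (toAff_bij n w⁻¹))
  · intro i
    have hd := decomp n i
    conv_lhs => rw [← hd]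
    conv_rhs => rw [← hd]
    rw [show (n:ℤ) * (i/n) + (residue n i : ℕ) + n = (n:ℤ)*(i/n + 1) + (residue n i : ℕ) by ring]
    show (toAff n u ∘ tLamFun n k ∘ toAff n w⁻¹) _ = (toAff n u ∘ tLamFun n k ∘ toAff n w⁻¹) _ + _
    rw [g_apply, g_apply]
    ring
  · have hsum : ∀ m : Fin n, f ((m:ℕ):ℤ) - ((m:ℕ):ℤ) =
        ((u (w⁻¹ m) : ℕ):ℤ) - ((m:ℕ):ℤ) +
          (n:ℤ) * (if ((w⁻¹ m : Fin n):ℕ) < k then 1 else 0) := by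
      intro m
      have : ((m:ℕ):ℤ) = (n:ℤ)*0 + (m:ℕ) := by ring
      rw [this]
      show (toAff n u ∘ tLamFun n k ∘ toAff n w⁻¹) _ - _ = _
      rw [g_apply]
      ring
    have e1 : ∑ i ∈ Finset.range n, (f i - i) = ∑ m : Fin n, (f ((m:ℕ):ℤ) - ((m:ℕ):ℤ)) :=
      (Fin.sum_univ_eq_sum_range (fun i => f (i:ℤ) - (i:ℤ)) n).symm
    rw [e1, Finset.sum_congr rfl (fun m _ => hsum m)]
    rw [Finset.sum_add_distrib, Finset.sum_sub_distrib, ← Finset.mul_sum]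
    have e2 : ∑ m : Fin n, ((u (w⁻¹ m) : ℕ):ℤ) = ∑ m : Fin n, ((m:ℕ):ℤ) :=
      Equiv.sum_comp (w⁻¹.trans u) (fun x : Fin n => ((x:ℕ):ℤ))
    have e3 : ∑ m : Fin n, (if ((w⁻¹ m : Fin n):ℕ) < k then (1:ℤ) else 0)
        = ∑ a : Fin n, (if (a:ℕ) < k then (1:ℤ) else 0) :=
      Equiv.sum_comp (w⁻¹ : Perm (Fin n)) (fun a : Fin n => if (a:ℕ) < k then (1:ℤ) else 0)
    have e4 : ∑ a : Fin n, (if (a:ℕ) < k then (1:ℤ) else 0) = (k:ℤ) := by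
      rw [Finset.sum_boole, card_filter_lt n k hk]
    rw [e2, e3, e4]
    ring
  · intro i
    have hd := decomp n i
    set m := residue n i with hm
    set a := w⁻¹ m with ha
    have hwa : w a = m := by rw [ha]; simp
    have h0 : (0:ℤ) ≤ (u a : ℕ) := by positivity
    have h1 : ((u a : ℕ):ℤ) < n := by exact_mod_cast (u a).isLt
    have h2 : (0:ℤ) ≤ (m:ℕ) := by positivity
    have h3 : ((m:ℕ):ℤ) < n := by exact_mod_cast m.isLt
    have hfi : f i = (n:ℤ)*(i/n + if (a:ℕ) < k then 1 else 0) + (u a : ℕ) := by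
      conv_lhs => rw [← hd]
      show (toAff n u ∘ tLamFun n k ∘ toAff n w⁻¹) _ = _
      rw [g_apply]
    by_cases hak : (a:ℕ) < k
    · have hua : u a ≤ w a := (hcw a).1 hak
      have hua' : ((u a:ℕ):ℤ) ≤ ((m:ℕ):ℤ) := by
        rw [← hwa]; exact_mod_cast hua
      rw [hfi, if_pos hak]
      constructor
      · nlinarith [hd]
      · nlinarith [hd]
    · have hkb : k ≤ (a:ℕ) := not_lt.mp hak
      have hua : w a ≤ u a := (hcw a).2 hkb
      have hua' : ((m:ℕ):ℤ) ≤ ((u a:ℕ):ℤ) := by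
        rw [← hwa]; exact_mod_cast hua
      rw [hfi, if_neg hak]
      constructor
      · nlinarith [hd]
      · nlinarith [hd]

section Forward
variable {n}

lemma per_gen {f : ℤ → ℤ} (hper : ∀ i : ℤ, f (i + n) = f i + n) (i : ℤ) (q : ℤ) :
    f (i + n * q) = f i + n * q := by
  induction q using Int.induction_on with
  | zero => simp
  | succ q ih =>
    have := hper (i + n * q)
    rw [show i + (n:ℤ) * (q+1) = i + n*q + n by ring, this, ih]; ring
  | pred q ih =>
    have e : (n:ℤ)*(-(q:ℤ)-1) = n*(-(q:ℤ)) - n := by ring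
    have h2 : i + (n:ℤ) * (-(q:ℤ)-1) + n = i + n * (-(q:ℤ)) := by ring
    have h3 := hper (i + (n:ℤ) * (-(q:ℤ)-1))
    rw [h2] at h3
    linarith [h3, ih, e]

variable [NeZero n]

lemma sigma_inj {f : ℤ → ℤ} (hbij : Function.Bijective f)
    (hper : ∀ i : ℤ, f (i + n) = f i + n)
    (hbdd : ∀ i : ℤ, i ≤ f i ∧ f i ≤ i + n) :
    Function.Injective (fun r : Fin n => residue n (f ((r:ℕ):ℤ))) := by
  intro r r' h
  simp only at h
  have h1 := decomp n (f ((r:ℕ):ℤ))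
  have h2 := decomp n (f ((r':ℕ):ℤ))
  rw [h] at h1
  have hr : ((r:ℕ):ℤ) < n := by exact_mod_cast r.isLt
  have hr' : ((r':ℕ):ℤ) < n := by exact_mod_cast r'.isLt
  have hr0 : (0:ℤ) ≤ (r:ℕ) := by positivity
  have hr0' : (0:ℤ) ≤ (r':ℕ) := by positivity
  have b1 := hbdd ((r:ℕ):ℤ)
  have b2 := hbdd ((r':ℕ):ℤ)
  set q1 := f ((r:ℕ):ℤ) / n with hq1
  set q2 := f ((r':ℕ):ℤ) / n with hq2
  have hn := hnpos n
  set d := q1 - q2 with hd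
  have hnd : f ((r:ℕ):ℤ) - f ((r':ℕ):ℤ) = n * d := by rw [hd]; linarith [h1, h2]
  have hdlt : d < 2 := by nlinarith
  have hdgt : -2 < d := by nlinarith
  have heq : f ((r:ℕ):ℤ) = f ((r':ℕ):ℤ) := by
    rcases (by omega : d = -1 ∨ d = 0 ∨ d = 1) with h' | h' | h'
    · exfalso
      have : f ((r':ℕ):ℤ) = f ((r:ℕ):ℤ) + n := by rw [h'] at hnd; linarith
      rw [← hper ((r:ℕ):ℤ)] at this
      have := hbij.1 this
      omega
    · rw [h'] at hnd; linarith
    · exfalso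
      have : f ((r:ℕ):ℤ) = f ((r':ℕ):ℤ) + n := by rw [h'] at hnd; linarith
      rw [← hper ((r':ℕ):ℤ)] at this
      have := hbij.1 this
      omega
  have := hbij.1 heq
  ext
  omega

/-- value decomposition -/
lemma f_decomp {f : ℤ → ℤ} (hbdd : ∀ i : ℤ, i ≤ f i ∧ f i ≤ i + n) (r : Fin n) :
    f ((r:ℕ):ℤ) = ((residue n (f ((r:ℕ):ℤ)) : Fin n):ℕ)
      + (if (n:ℤ) ≤ f ((r:ℕ):ℤ) then (n:ℤ) else 0) := by
  have h1 := decomp n (f ((r:ℕ):ℤ))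
  have hr : ((r:ℕ):ℤ) < n := by exact_mod_cast r.isLt
  have hr0 : (0:ℤ) ≤ (r:ℕ) := by positivity
  have b := hbdd ((r:ℕ):ℤ)
  set s := ((residue n (f ((r:ℕ):ℤ)) : Fin n):ℕ) with hs
  have hslt : ((s:ℕ):ℤ) < n := by exact_mod_cast (residue n (f ((r:ℕ):ℤ))).isLt
  have hs0 : (0:ℤ) ≤ (s:ℕ) := by positivity
  set q := f ((r:ℕ):ℤ) / n
  have hn := hnpos n
  have hq0 : 0 ≤ q := Int.ediv_nonneg (le_trans hr0 b.1) (le_of_lt hn)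
  have hq2 : q < 2 := by
    rw [Int.ediv_lt_iff_lt_mul hn]
    linarith [b.2]
  have hq : q = 0 ∨ q = 1 := by omega
  rcases hq with hq | hq
  · rw [hq] at h1
    rw [if_neg (by omega)]
    omega
  · rw [hq] at h1
    rw [if_pos (by omega)]
    omega

end Forward

section Chain
variable {n} [NeZero n]

/-- If `σ r = r` on `C` and `r ≤ σ r` off `C`, then `σ = 1`. -/
lemma sigma_eq_one (C : Finset (Fin n)) (σ : Perm (Fin n))
    (hC : ∀ r ∈ C, σ r = r) (hnC : ∀ r ∉ C, r ≤ σ r) : σ = 1 := by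
  classical
  have hmap : ∀ r ∉ C, σ r ∉ C := by
    intro r hr hσr
    have := hC _ hσr
    exact hr (by rwa [σ.injective this] at hσr)
  set D := Cᶜ with hD
  have himg : D.image σ = D := by
    apply Finset.eq_of_subset_of_card_le
    · intro x hx
      obtain ⟨r, hr, rfl⟩ := Finset.mem_image.mp hx
      rw [hD, Finset.mem_compl] at hr ⊢
      exact hmap r hr
    · rw [Finset.card_image_of_injective _ σ.injective]
  have hsum : ∑ r ∈ D, ((σ r : ℕ)) = ∑ r ∈ D, ((r : ℕ)) := by
    conv_rhs => rw [← himg]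
    rw [Finset.sum_image (fun x _ y _ h => σ.injective h)]
  have hfix : ∀ r ∈ D, σ r = r := by
    by_contra hcon
    push_neg at hcon
    obtain ⟨r₀, hr₀, hne⟩ := hcon
    have hlt : ∑ r ∈ D, ((r:ℕ)) < ∑ r ∈ D, ((σ r : ℕ)) := by
      apply Finset.sum_lt_sum
      · intro i hi
        exact_mod_cast hnC i (Finset.mem_compl.mp hi)
      · refine ⟨r₀, hr₀, ?_⟩
        have := hnC r₀ (Finset.mem_compl.mp hr₀)
        exact lt_of_le_of_ne (by exact_mod_cast this) (fun h => hne (by ext; omega))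
    omega
  ext x
  by_cases hx : x ∈ C
  · rw [hC x hx]; rfl
  · rw [hfix x (Finset.mem_compl.mpr hx)]; rfl

lemma good_pair (C : Finset (Fin n)) (σ : Perm (Fin n))
    (hinv : ∀ r, (r ∈ C → σ r ≤ r) ∧ (r ∉ C → r ≤ σ r))
    (hex : ∃ r ∈ C, σ r ≠ r) :
    ∃ r s : Fin n, r ∈ C ∧ s ∉ C ∧ s ≤ σ r ∧ σ r < σ s ∧ σ s ≤ r := by
  classical
  set D := C.filter (fun r => σ r < r) with hDdef
  have hDne : D.Nonempty := by
    obtain ⟨r, hr, hne⟩ := hex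
    exact ⟨r, Finset.mem_filter.mpr ⟨hr, lt_of_le_of_ne ((hinv r).1 hr) hne⟩⟩
  obtain ⟨r, hrD, hrmax⟩ := Finset.exists_max_image D (fun r => σ r) hDne
  rw [hDdef, Finset.mem_filter] at hrD
  obtain ⟨hrC, hrlt⟩ := hrD
  set v := σ r with hv
  -- the interval of values (v, r]
  set V := Finset.Ioc v r with hV
  have hrV : r ∈ V := Finset.mem_Ioc.mpr ⟨hrlt, le_refl r⟩
  have hvV : v ∉ V := fun h => absurd (Finset.mem_Ioc.mp h).1 (lt_irrefl v)
  -- there is a value x in V whose position is outside V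
  have hexx : ∃ x ∈ V, σ⁻¹ x ∉ V := by
    by_contra hcon
    push_neg at hcon
    have himg : V.image (fun x => σ⁻¹ x) = V := by
      apply Finset.eq_of_subset_of_card_le
      · intro p hp
        obtain ⟨x, hx, rfl⟩ := Finset.mem_image.mp hp
        exact hcon x hx
      · rw [Finset.card_image_of_injective V (Equiv.injective σ⁻¹)]
    have hrmem : r ∈ V.image (fun x => σ⁻¹ x) := by rw [himg]; exact hrV
    obtain ⟨x, hxV, hxr⟩ := Finset.mem_image.mp hrmem
    have hxv : x = v := by
      rw [hv, ← hxr]; simp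
    exact hvV (hxv ▸ hxV)
  obtain ⟨x, hxV, hpV⟩ := hexx
  set p := σ⁻¹ x with hp
  have hσp : σ p = x := by rw [hp]; simp
  obtain ⟨hvx, hxr⟩ := Finset.mem_Ioc.mp hxV
  rw [hV, Finset.mem_Ioc] at hpV
  push_neg at hpV
  -- p ≤ v or p > r
  by_cases hpv : v < p
  ·
    have hrp : r < p := hpV hpv
    -- p must be in C
    have hpC : p ∈ C := by
      by_contra hpC
      have := (hinv p).2 hpC
      rw [hσp] at this
      exact absurd (lt_of_le_of_lt this (lt_of_le_of_lt hxr hrp)) (lt_irrefl p)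
    -- σ p = x < p and x > v contradicts maximality
    exfalso
    have hpD : p ∈ D := Finset.mem_filter.mpr ⟨hpC, by rw [hσp]; exact lt_of_le_of_lt hxr hrp⟩
    have := hrmax p hpD
    rw [hσp] at this
    exact absurd (lt_of_lt_of_le hvx this) (lt_irrefl v)
  · push_neg at hpv
    -- p ≤ v, p ∉ C
    have hpC : p ∉ C := by
      intro hpC
      have := (hinv p).1 hpC
      rw [hσp] at this
      exact absurd (lt_of_lt_of_le hvx (le_trans this hpv)) (lt_irrefl v)
    exact ⟨r, p, hrC, hpC, by rw [← hv]; exact hpv, by rw [hσp, ← hv]; exact hvx,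
      by rw [hσp]; exact hxr⟩
end Chain


section Chain2
variable {n} [NeZero n]

lemma chain_exists (C : Finset (Fin n)) (D : ℕ) (σ : Perm (Fin n))
    (hD : (∑ r ∈ C, ((r:ℕ) - ((σ r:Fin n):ℕ))) = D)
    (hinv : ∀ r, (r ∈ C → σ r ≤ r) ∧ (r ∉ C → r ≤ σ r)) :
    Relation.ReflTransGen (fun σ σ' : Perm (Fin n) => ∃ r s : Fin n, r ∈ C ∧ s ∉ C ∧
      σ r < σ s ∧ σ' = σ * Equiv.swap r s) σ 1 := by
  classical
  induction D using Nat.strong_induction_on generalizing σ with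
  | _ D ih =>
    by_cases hfix : ∀ r ∈ C, σ r = r
    · have h1 : σ = 1 := sigma_eq_one C σ hfix (fun r hr => (hinv r).2 hr)
      rw [h1]
    · push_neg at hfix
      obtain ⟨r, s, hrC, hsC, hsv, hlt, hvr⟩ := good_pair C σ hinv
        (by obtain ⟨t, ht, hne⟩ := hfix; exact ⟨t, ht, hne⟩)
      have hrs : r ≠ s := fun h => hsC (h ▸ hrC)
      set σ' := σ * Equiv.swap r s with hσ'
      have hσ'r : σ' r = σ s := by rw [hσ']; simp
      have hσ's : σ' s = σ r := by rw [hσ']; simp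
      have hσ't : ∀ t, t ≠ r → t ≠ s → σ' t = σ t := by
        intro t h1 h2
        rw [hσ']
        simp [Equiv.Perm.mul_apply, Equiv.swap_apply_of_ne_of_ne h1 h2]
      have hinv' : ∀ t, (t ∈ C → σ' t ≤ t) ∧ (t ∉ C → t ≤ σ' t) := by
        intro t
        constructor
        · intro htC
          by_cases htr : t = r
          · rw [htr, hσ'r]; exact hvr
          · rw [hσ't t htr (fun h => hsC (h ▸ htC))]
            exact (hinv t).1 htC
        · intro htC
          by_cases hts : t = s
          · rw [hts, hσ's]; exact hsv
          · by_cases htr : t = r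
            · exact absurd (htr ▸ hrC) htC
            · rw [hσ't t htr hts]
              exact (hinv t).2 htC
      have hlt' : (∑ t ∈ C, ((t:ℕ) - ((σ' t:Fin n):ℕ))) < D := by
        rw [← hD]
        apply Finset.sum_lt_sum
        · intro t htC
          by_cases htr : t = r
          · rw [htr, hσ'r]
            have h1 : (σ r : Fin n) < σ s := hlt
            rw [Fin.lt_def] at h1
            omega
          · rw [hσ't t htr (fun h => hsC (h ▸ htC))]
        · refine ⟨r, hrC, ?_⟩
          rw [hσ'r]
          have h1 : (σ r : Fin n) < σ s := hlt
          have h2 : (σ s : Fin n) ≤ r := hvr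
          have h3 : (σ r : Fin n) ≤ r := (hinv r).1 hrC
          rw [Fin.lt_def] at h1
          rw [Fin.le_def] at h2 h3
          omega
      exact Relation.ReflTransGen.head ⟨r, s, hrC, hsC, hlt, rfl⟩
        (ih _ hlt' σ' rfl hinv')
end Chain2

section W
variable {n} [NeZero n]

lemma exists_w (C : Finset (Fin n)) (k : ℕ) (hk : k ≤ n) (hcard : C.card = k) :
    ∃ w : Perm (Fin n), ∀ a : Fin n, ((a:ℕ) < k ↔ w a ∈ C) := by
  classical
  set A : Finset (Fin n) := Finset.univ.filter (fun a : Fin n => (a:ℕ) < k) with hA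
  have hAcard : A.card = k := card_filter_lt n k hk
  have h1 : Fintype.card ↥A = Fintype.card ↥C := by
    rw [Fintype.card_coe, Fintype.card_coe, hAcard, hcard]
  have h2 : Fintype.card ↥(Aᶜ) = Fintype.card ↥(Cᶜ) := by
    rw [Fintype.card_coe, Fintype.card_coe, Finset.card_compl, Finset.card_compl,
      hAcard, hcard]
  obtain e := Fintype.equivOfCardEq h1
  obtain e' := Fintype.equivOfCardEq h2
  set g : Fin n → Fin n := fun a =>
    if h : a ∈ A then (e ⟨a, h⟩ : Fin n) else (e' ⟨a, Finset.mem_compl.mpr h⟩ : Fin n) with hg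
  have hgmem : ∀ a : Fin n, (a ∈ A ↔ g a ∈ C) := by
    intro a
    by_cases h : a ∈ A
    · simp only [hg, dif_pos h]
      exact ⟨fun _ => (e ⟨a, h⟩).2, fun _ => h⟩
    · simp only [hg, dif_neg h]
      have := (e' ⟨a, Finset.mem_compl.mpr h⟩).2
      rw [Finset.mem_compl] at this
      exact ⟨fun h' => absurd h' h, fun h' => absurd h' this⟩
  have hginj : Function.Injective g := by
    intro a b hab
    by_cases ha : a ∈ A <;> by_cases hb : b ∈ A
    · simp only [hg, dif_pos ha, dif_pos hb] at hab
      have := e.injective (Subtype.coe_injective hab)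
      exact congrArg Subtype.val this
    · exfalso
      have h1 : g a ∈ C := (hgmem a).mp ha
      have h2 : g b ∈ C := hab ▸ h1
      exact hb ((hgmem b).mpr h2)
    · exfalso
      have h1 : g b ∈ C := (hgmem b).mp hb
      have h2 : g a ∈ C := hab ▸ h1
      exact ha ((hgmem a).mpr h2)
    · simp only [hg, dif_neg ha, dif_neg hb] at hab
      have := e'.injective (Subtype.coe_injective hab)
      exact congrArg Subtype.val this
  refine ⟨Equiv.ofBijective g (Finite.injective_iff_bijective.mp hginj), fun a => ?_⟩
  have : Equiv.ofBijective g (Finite.injective_iff_bijective.mp hginj) a = g a := rfl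
  rw [this, ← hgmem a, hA, Finset.mem_filter]
  simp

lemma lift_chain (C : Finset (Fin n)) (k : ℕ) (w : Perm (Fin n))
    (hw : ∀ a : Fin n, ((a:ℕ) < k ↔ w a ∈ C)) (σ : Perm (Fin n))
    (hchain : Relation.ReflTransGen (fun σ σ' : Perm (Fin n) => ∃ r s : Fin n, r ∈ C ∧ s ∉ C ∧
      σ r < σ s ∧ σ' = σ * Equiv.swap r s) σ 1) :
    extKLE n k (σ * w) w := by
  have hstep : ∀ σ σ' : Perm (Fin n), (∃ r s : Fin n, r ∈ C ∧ s ∉ C ∧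
      σ r < σ s ∧ σ' = σ * Equiv.swap r s) →
      (∃ a b : Fin n, (a:ℕ) < k ∧ k ≤ (b:ℕ) ∧
        σ' * w = (σ * w) * Equiv.swap a b ∧ invLength n (σ * w) < invLength n (σ' * w)) := by
    rintro σ σ' ⟨r, s, hrC, hsC, hlt, rfl⟩
    have hak : ((w⁻¹ r : Fin n):ℕ) < k := by
      rw [hw (w⁻¹ r)]; simpa using hrC
    have hkb : k ≤ ((w⁻¹ s : Fin n):ℕ) := by
      rw [← not_lt, hw (w⁻¹ s)]; simpa using hsC
    have hab : (w⁻¹ r : Fin n) < w⁻¹ s := by rw [Fin.lt_def]; omega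
    have hswap : Equiv.swap (w⁻¹ r : Fin n) (w⁻¹ s) = w⁻¹ * Equiv.swap r s * w := by
      have := Equiv.swap_apply_apply (w⁻¹ : Perm (Fin n)) r s
      rwa [inv_inv] at this
    have hmul : σ * Equiv.swap r s * w
        = (σ * w) * Equiv.swap (w⁻¹ r : Fin n) (w⁻¹ s) := by
      rw [hswap]; group
    have hval : (σ * w) (w⁻¹ r) < (σ * w) (w⁻¹ s) := by
      simpa [Equiv.Perm.mul_apply] using hlt
    have hlen := invLength_lt n (σ * w) _ _ hab hval
    rw [← hmul] at hlen
    exact ⟨w⁻¹ r, w⁻¹ s, hak, hkb, hmul, hlen⟩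
  have := Relation.ReflTransGen.lift
    (p := fun u v : Perm (Fin n) => ∃ a b : Fin n, (a:ℕ) < k ∧ k ≤ (b:ℕ) ∧
      v = u * Equiv.swap a b ∧ invLength n u < invLength n v)
    (fun σ : Perm (Fin n) => σ * w) hstep _ _ hchain
  simp only [Function.onFun, one_mul] at this
  exact this
end W

theorem boundedAffine_iff (k : ℕ) (hk : k ≤ n) (f : ℤ → ℤ) :
    (Function.Bijective f ∧ (∀ i : ℤ, f (i + n) = f i + n) ∧
      (∑ i ∈ Finset.range n, (f i - i)) = (k : ℤ) * n ∧
      (∀ i : ℤ, i ≤ f i ∧ f i ≤ i + n)) ↔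
    ∃ u w : Perm (Fin n), extKLE n k u w ∧
      f = toAff n u ∘ tLamFun n k ∘ toAff n w⁻¹ := by
  classical
  constructor
  · rintro ⟨hbij, hper, hsum, hbdd⟩
    set sfun : Fin n → Fin n := fun r => residue n (f ((r:ℕ):ℤ)) with hsfun
    have hinj : Function.Injective sfun := sigma_inj hbij hper hbdd
    set σ : Perm (Fin n) := Equiv.ofBijective sfun (Finite.injective_iff_bijective.mp hinj)
      with hσdef
    have hσ : ∀ r : Fin n, σ r = residue n (f ((r:ℕ):ℤ)) := fun r => rfl
    set C : Finset (Fin n) := Finset.univ.filter (fun r : Fin n => (n:ℤ) ≤ f ((r:ℕ):ℤ))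
      with hCdef
    have hmemC : ∀ r : Fin n, r ∈ C ↔ (n:ℤ) ≤ f ((r:ℕ):ℤ) := by
      intro r; rw [hCdef, Finset.mem_filter]; simp
    have hfd : ∀ r : Fin n, f ((r:ℕ):ℤ) = ((σ r : Fin n):ℕ)
        + (if r ∈ C then (n:ℤ) else 0) := by
      intro r
      rw [hσ r]
      conv_lhs => rw [f_decomp hbdd r]
      congr 1
      simp only [hmemC r]
    -- cardinality of C is k
    have hcard : C.card = k := by
      have e1 : ∑ i ∈ Finset.range n, (f i - i) = ∑ m : Fin n, (f ((m:ℕ):ℤ) - ((m:ℕ):ℤ)) :=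
        (Fin.sum_univ_eq_sum_range (fun i => f (i:ℤ) - (i:ℤ)) n).symm
      rw [e1] at hsum
      have e2 : ∀ m : Fin n, f ((m:ℕ):ℤ) - ((m:ℕ):ℤ)
          = (((σ m : Fin n):ℕ):ℤ) - ((m:ℕ):ℤ) + (if m ∈ C then (n:ℤ) else 0) := by
        intro m; rw [hfd m]; ring
      rw [Finset.sum_congr rfl (fun m _ => e2 m)] at hsum
      rw [Finset.sum_add_distrib, Finset.sum_sub_distrib] at hsum
      have e3 : ∑ m : Fin n, (((σ m : Fin n):ℕ):ℤ) = ∑ m : Fin n, ((m:ℕ):ℤ) :=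
        Equiv.sum_comp σ (fun x : Fin n => ((x:ℕ):ℤ))
      have e4 : ∑ m : Fin n, (if m ∈ C then (n:ℤ) else 0) = (C.card : ℤ) * n := by
        rw [Finset.sum_ite, Finset.sum_const, Finset.sum_const_zero, add_zero]
        simp [hCdef, nsmul_eq_mul]
      rw [e3, e4] at hsum
      have hn0 : (n:ℤ) ≠ 0 := ne_of_gt (hnpos n)
      have : (C.card : ℤ) = (k:ℤ) := by
        apply mul_right_cancel₀ hn0
        linarith [hsum]
      exact_mod_cast this
    -- invariants
    have hinv : ∀ r : Fin n, (r ∈ C → σ r ≤ r) ∧ (r ∉ C → r ≤ σ r) := by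
      intro r
      have hb := hbdd ((r:ℕ):ℤ)
      have hfdr := hfd r
      constructor
      · intro hrC
        rw [if_pos hrC] at hfdr
        have : (((σ r : Fin n):ℕ):ℤ) ≤ ((r:ℕ):ℤ) := by omega
        rw [Fin.le_def]
        exact_mod_cast this
      · intro hrC
        rw [if_neg hrC] at hfdr
        have : ((r:ℕ):ℤ) ≤ (((σ r : Fin n):ℕ):ℤ) := by omega
        rw [Fin.le_def]
        exact_mod_cast this
    obtain ⟨w, hw⟩ := exists_w C k hk hcard
    have hchain := chain_exists C _ σ rfl hinv
    have hle := lift_chain C k w hw σ hchain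
    refine ⟨σ * w, w, hle, ?_⟩
    funext i
    have hd := decomp n i
    set q := i / (n:ℤ) with hq
    set m := residue n i with hm
    have harg : i = ((m:ℕ):ℤ) + (n:ℤ) * q := by omega
    have hlhs : f i = f ((m:ℕ):ℤ) + (n:ℤ) * q := by
      rw [harg]; exact per_gen hper _ q
    have hrhs : (toAff n (σ * w) ∘ tLamFun n k ∘ toAff n w⁻¹) i
        = (n:ℤ)*(q + if ((w⁻¹ m : Fin n):ℕ) < k then 1 else 0) + (((σ * w) (w⁻¹ m) : ℕ):ℤ) := by
      conv_lhs => rw [← hd]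
      exact g_apply n (σ * w) w k q m
    rw [hlhs, hrhs]
    have huv : ((σ * w) (w⁻¹ m) : Fin n) = σ m := by
      simp [Equiv.Perm.mul_apply]
    have hite : (((w⁻¹ m : Fin n):ℕ) < k) ↔ m ∈ C := by
      rw [hw (w⁻¹ m)]
      simp
    rw [huv, hfd m]
    by_cases hmC : m ∈ C
    · rw [if_pos hmC, if_pos (hite.mpr hmC)]; ring
    · rw [if_neg hmC, if_neg (fun h => hmC (hite.mp h))]; ring
  · rintro ⟨u, w, hle, rfl⟩
    exact back_dir n k hk u w hle
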